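/- Strict Hessenberg determinant inequality: for the moment matrices W^n built from a non-Dirac probability measure Q on [0,1] and parameters γ_i ∈ (0,∞), and for any 1 ≤ j ≤ n, one has det(W^{j−1}) · det(W^{j+1,n}) < d det(W^n)/dγ_j, where the derivative with respect to γ_j equals the determinant of the matrix obtained from W^n by deleting the row and column containing −γ_j. -/

import Mathlib

open MeasureTheory

/-- The moment matrix `W^{j,n}` (here of size `s`, with subdiagonal entries
`-γ_start, -γ_{start+1}, …`), with first row `(m_{1+shift}, …, m_{s+shift})` and
Toeplitz moment entries `m_{k-i+1}` above the subdiagonal. -/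
noncomputable def Wgen (m γ : ℕ → ℝ) (shift start s : ℕ) : Matrix (Fin s) (Fin s) ℝ :=
  Matrix.of fun i k =>
    if (i : ℕ) = 0 then m ((k : ℕ) + 1 + shift)
    else if (k : ℕ) + 1 = (i : ℕ) then -γ (start + (i : ℕ) - 1)
    else if (i : ℕ) ≤ (k : ℕ) then m ((k : ℕ) - (i : ℕ) + 1)
    else 0

set_option linter.unnecessarySeqFocus false

lemma Wgen_sub0 (m γ : ℕ → ℝ) (sh st s : ℕ) :
    (Wgen m γ sh st (s+2)).submatrix (Fin.succAbove 0) Fin.succ = Wgen m γ 0 (st+1) (s+1) := by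
  ext i k
  simp only [Matrix.submatrix_apply, Fin.succAbove_zero, Wgen, Matrix.of_apply, Fin.val_succ]
  split_ifs <;> try rfl
  all_goals try exact (by assumption : False).elim
  all_goals try omega
  all_goals try (congr 1 <;> omega)
  all_goals try (congr 2 <;> omega)

lemma Wgen_sub1 (m γ : ℕ → ℝ) (sh st s : ℕ) :
    (Wgen m γ sh st (s+2)).submatrix (Fin.succAbove 1) Fin.succ = Wgen m γ (sh+1) (st+1) (s+1) := by
  have hv : ∀ i : Fin (s+1), (((1 : Fin (s+2)).succAbove i) : ℕ)
      = if (i:ℕ) = 0 then 0 else (i:ℕ)+1 := by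
    intro i
    rcases eq_or_ne ((i:ℕ)) 0 with h | h
    · simp [Fin.succAbove, Fin.lt_def, h, Fin.ext_iff]
    · simp only [Fin.succAbove, Fin.lt_def, Fin.coe_castSucc, Fin.val_one, Fin.val_succ]
      rw [if_neg (by omega), if_neg h]
      exact Fin.val_succ i
  ext i k
  simp only [Matrix.submatrix_apply, Wgen, Matrix.of_apply, Fin.val_succ, hv]
  rcases eq_or_ne ((i:ℕ)) 0 with h | h
  · simp only [h, if_true, if_false, eq_self_iff_true, if_pos]
    congr 1; omega
  · simp only [h, if_false, if_neg h]
    split_ifs <;> try rfl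
    all_goals try exact (by assumption : False).elim
    all_goals try omega
    all_goals try (congr 1 <;> omega)
    all_goals try (congr 2 <;> omega)

lemma Wgen_det_one (m γ : ℕ → ℝ) (sh st : ℕ) : (Wgen m γ sh st 1).det = m (1 + sh) := by
  rw [Matrix.det_fin_one]
  simp [Wgen]

lemma Wgen_rec (m γ : ℕ → ℝ) (sh st s : ℕ) :
    (Wgen m γ sh st (s+2)).det
      = m (1+sh) * (Wgen m γ 0 (st+1) (s+1)).det
        + γ st * (Wgen m γ (sh+1) (st+1) (s+1)).det := by
  rw [show s+2 = (s+1)+1 from rfl, show ((s+1)+1 : ℕ) = (s+1).succ from rfl,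
    Matrix.det_succ_column_zero, Fin.sum_univ_succ, Fin.sum_univ_succ]
  rw [show (Fin.succ 0 : Fin (s+2)) = 1 from rfl]
  have h0 : (Wgen m γ sh st (s+2)) 0 0 = m (1 + sh) := by
    simp [Wgen]
  have h1 : (Wgen m γ sh st (s+2)) 1 0 = -γ st := by
    have : ((1 : Fin (s+2)) : ℕ) = 1 := rfl
    simp [Wgen, this]
  have hz : ∀ i : Fin s, (Wgen m γ sh st (s+2)) i.succ.succ 0 = 0 := by
    intro i
    have h2 : ((i.succ.succ : Fin (s+2)) : ℕ) = (i:ℕ) + 2 := rfl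
    simp only [Wgen, Matrix.of_apply, h2, Fin.val_zero]
    rw [if_neg (by omega), if_neg (by omega), if_neg (by omega)]
  rw [h0, h1, Wgen_sub0, Wgen_sub1]
  have : ∀ i : Fin s, (-1:ℝ) ^ ((i.succ.succ : Fin (s+2)) : ℕ)
      * (Wgen m γ sh st (s+2)) i.succ.succ 0
      * ((Wgen m γ sh st (s+2)).submatrix (Fin.succAbove i.succ.succ) Fin.succ).det = 0 := by
    intro i
    rw [hz, mul_zero, zero_mul]
  rw [Finset.sum_congr rfl (fun i _ => this i), Finset.sum_const, smul_zero]
  simp only [Fin.val_zero, Fin.val_one, pow_zero, pow_one, add_zero]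
  ring

section ind
variable {m γ : ℕ → ℝ}

lemma Wgen_congr {γ1 γ2 : ℕ → ℝ} (mm : ℕ → ℝ) (sh st s : ℕ)
    (h : ∀ i, st ≤ i → γ1 i = γ2 i) : Wgen mm γ1 sh st s = Wgen mm γ2 sh st s := by
  ext i k
  simp only [Wgen, Matrix.of_apply]
  split_ifs with h1 h2 <;> try rfl
  rw [h _ (by omega)]

lemma Wgen_pos (hm : ∀ k, 1 ≤ k → 0 < m k) (hγ : ∀ i, 0 < γ i) : ∀ s sh st, 0 < (Wgen m γ sh st s).det := by
  intro s
  induction s using Nat.twoStepInduction with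
  | zero => intro sh st; simp [Matrix.det_fin_zero]
  | one => intro sh st; rw [Wgen_det_one]; exact hm _ (by omega)
  | more s ih ih2 =>
    intro sh st
    rw [Wgen_rec]
    have := ih2 0 (st+1)
    have := ih2 (sh+1) (st+1)
    have := hm (1+sh) (by omega)
    have := hγ st
    positivity

lemma Wgen_holder (hm : ∀ k, 1 ≤ k → 0 < m k) (hγ : ∀ i, 0 < γ i)
    (hch : ∀ a b, 1 ≤ a → 1 ≤ b → m a * m b < m (a+b)) : ∀ s, 1 ≤ s → ∀ a b st, 1 ≤ a →
    m a * (Wgen m γ b st s).det < (Wgen m γ (a+b) st s).det := by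
  intro s
  induction s using Nat.twoStepInduction with
  | zero => omega
  | one =>
    intro _ a b st ha
    rw [Wgen_det_one, Wgen_det_one, show 1+(a+b) = a+(1+b) from by omega]
    exact hch a (1+b) ha (by omega)
  | more s ih ih2 =>
    intro _ a b st ha
    rw [Wgen_rec, Wgen_rec]
    have t1 : m a * m (1+b) < m (1+(a+b)) := by
      rw [show 1+(a+b) = a+(1+b) from by omega]
      exact hch a (1+b) ha (by omega)
    have t2 : m a * (Wgen m γ (b+1) (st+1) (s+1)).det
        < (Wgen m γ ((a+b)+1) (st+1) (s+1)).det := by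
      rw [show (a+b)+1 = a+(b+1) from by omega]
      exact ih2 (by omega) a (b+1) (st+1) ha
    have hP0 := Wgen_pos hm hγ (s+1) 0 (st+1)
    have hg := hγ st
    nlinarith [mul_lt_mul_of_pos_right t1 hP0, mul_lt_mul_of_pos_left t2 hg]

lemma Wgen_block : ∀ s sh st j, st ≤ j → j + 1 ≤ st + s →
    (Wgen m (Function.update γ j 0) sh st s).det
      = (Wgen m γ sh st (j - st + 1)).det * (Wgen m γ 0 (j+1) (st + s - (j+1))).det := by
  intro s
  induction s with
  | zero => intro sh st j h1 h2; omega
  | succ s ih =>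
    intro sh st j h1 h2
    rcases Nat.eq_or_lt_of_le h1 with hj | hj
    · -- j = st
      subst hj
      rcases Nat.eq_zero_or_pos s with hs | hs
      · subst hs
        rw [Wgen_det_one, show st - st + 1 = 1 from by omega, Wgen_det_one,
          show st + 1 - (st+1) = 0 from by omega]
        simp [Matrix.det_fin_zero]
      · obtain ⟨t, rfl⟩ : ∃ t, s = t + 1 := ⟨s - 1, by omega⟩
        rw [show t+1+1 = t+2 from rfl, Wgen_rec,
          Wgen_congr m 0 (st+1) (t+1) (fun i hi => Function.update_of_ne (by omega) _ _),
          Wgen_congr m (sh+1) (st+1) (t+1) (fun i hi => Function.update_of_ne (by omega) _ _),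
          Function.update_self,
          show st - st + 1 = 1 from by omega, Wgen_det_one,
          show st + (t+2) - (st+1) = t+1 from by omega]
        ring
    · -- st < j
      obtain ⟨t, rfl⟩ : ∃ t, s = t + 1 := by
        rcases Nat.eq_zero_or_pos s with hs | hs
        · omega
        · exact ⟨s - 1, by omega⟩
      rw [show t+1+1 = t+2 from rfl, Wgen_rec,
        show Function.update γ j 0 st = γ st from Function.update_of_ne (by omega) _ _,
        ih 0 (st+1) j (by omega) (by omega), ih (sh+1) (st+1) j (by omega) (by omega)]
      have hsz : j - (st+1) + 1 + 1 = (j - st - 1) + 2 := by omega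
      have hjst : j - st + 1 = (j - st - 1) + 2 := by omega
      rw [show st + 1 + (t+1) - (j+1) = st + (t+2) - (j+1) from by omega,
        show j - (st+1) + 1 = (j - st - 1) + 1 from by omega, hjst, Wgen_rec]
      ring

lemma Wgen_gen (hm : ∀ k, 1 ≤ k → 0 < m k) (hγ : ∀ i, 0 < γ i)
    (hch : ∀ a b, 1 ≤ a → 1 ≤ b → m a * m b < m (a+b)) : ∀ s sh st j, st ≤ j → j + 2 ≤ st + s →
    2 * (Wgen m (Function.update γ j 0) sh st s).det
      < (Wgen m (Function.update γ j 1) sh st s).det := by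
  intro s
  induction s with
  | zero => intro sh st j h1 h2; omega
  | succ s ih =>
    intro sh st j h1 h2
    obtain ⟨t, rfl⟩ : ∃ t, s = t + 1 := by
      rcases Nat.eq_zero_or_pos s with hs | hs
      · omega
      · exact ⟨s - 1, by omega⟩
    rw [show t+1+1 = t+2 from rfl, Wgen_rec, Wgen_rec]
    rcases Nat.eq_or_lt_of_le h1 with hj | hj
    · -- j = st
      subst hj
      rw [Wgen_congr (γ1 := Function.update γ st 0) (γ2 := γ) m 0 (st+1) (t+1)
          (fun i hi => Function.update_of_ne (by omega) _ _),
        Wgen_congr (γ1 := Function.update γ st 1) (γ2 := γ) m 0 (st+1) (t+1)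
          (fun i hi => Function.update_of_ne (by omega) _ _),
        Wgen_congr (γ1 := Function.update γ st 0) (γ2 := γ) m (sh+1) (st+1) (t+1)
          (fun i hi => Function.update_of_ne (by omega) _ _),
        Wgen_congr (γ1 := Function.update γ st 1) (γ2 := γ) m (sh+1) (st+1) (t+1)
          (fun i hi => Function.update_of_ne (by omega) _ _),
        Function.update_self, Function.update_self]
      have hh : m (1+sh) * (Wgen m γ 0 (st+1) (t+1)).det
          < (Wgen m γ ((1+sh)+0) (st+1) (t+1)).det :=
        Wgen_holder hm hγ hch (t+1) (by omega) (1+sh) 0 (st+1) (by omega)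
      rw [show (1+sh)+0 = sh+1 from by omega] at hh
      linarith
    · -- st < j
      rw [show Function.update γ j 0 st = γ st from Function.update_of_ne (by omega) _ _,
        show Function.update γ j 1 st = γ st from Function.update_of_ne (by omega) _ _]
      have i1 := ih 0 (st+1) j (by omega) (by omega)
      have i2 := ih (sh+1) (st+1) j (by omega) (by omega)
      have hm1 := hm (1+sh) (by omega)
      have hg := hγ st
      nlinarith

end ind


lemma eq_dirac_of_singleton (Q : Measure ℝ) [IsProbabilityMeasure Q] (a : ℝ)
    (h : Q {a} = 1) : Q = Measure.dirac a := by
  ext s hs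
  rw [Measure.dirac_apply' a hs]
  by_cases has : a ∈ s
  · rw [Set.indicator_of_mem has]
    refine le_antisymm (prob_le_one) ?_
    calc (1:ENNReal) = Q {a} := h.symm
    _ ≤ Q s := measure_mono (Set.singleton_subset_iff.2 has)
  · rw [Set.indicator_of_notMem has]
    have h2 : Q {a}ᶜ = 0 := by
      rw [measure_compl (measurableSet_singleton a) (measure_ne_top Q _), h]
      simp
    exact le_antisymm (le_trans (measure_mono (Set.subset_compl_singleton_iff.2 has)) h2.le) zero_le

lemma offdiag_pos (Q : Measure ℝ) [IsProbabilityMeasure Q]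
    (hnd : ¬ ∃ a : ℝ, Q = Measure.dirac a) :
    0 < (Q.prod Q) {p : ℝ × ℝ | p.1 ≠ p.2} := by
  have hdiag : MeasurableSet {p : ℝ × ℝ | p.1 = p.2} :=
    measurableSet_eq_fun measurable_fst measurable_snd
  rcases eq_or_ne ((Q.prod Q) {p : ℝ × ℝ | p.1 ≠ p.2}) 0 with h0 | h0
  · exfalso
    have hd1 : (Q.prod Q) {p : ℝ × ℝ | p.1 = p.2} = 1 := by
      have := measure_add_measure_compl (μ := Q.prod Q) hdiag
      have hc : {p : ℝ × ℝ | p.1 = p.2}ᶜ = {p : ℝ × ℝ | p.1 ≠ p.2} := rfl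
      rw [hc, h0, add_zero] at this
      simpa using this
    have hfeq : (fun x : ℝ => Q (Prod.mk x ⁻¹' {p : ℝ × ℝ | p.1 = p.2})) = fun x => Q {x} := by
      funext x
      congr 1
      ext y
      simp [eq_comm]
    have hmeas : Measurable fun x : ℝ => Q {x} := by
      rw [← hfeq]; exact measurable_measure_prodMk_left hdiag
    have hint : ∫⁻ x, Q {x} ∂Q = 1 := by
      rw [Measure.prod_apply hdiag, hfeq] at hd1
      exact hd1
    -- a.e. x, Q {x} = 1
    have hne : ∫⁻ x, Q {x} ∂Q ≠ ⊤ := by rw [hint]; exact ENNReal.one_ne_top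
    have hsub : ∫⁻ x, (1 - Q {x}) ∂Q = 0 := by
      rw [lintegral_sub hmeas hne (Filter.Eventually.of_forall fun x => prob_le_one), hint]
      simp
    have hae : ∀ᵐ x ∂Q, (1 : ENNReal) - Q {x} = 0 := by
      have := (lintegral_eq_zero_iff (Measurable.const_sub hmeas 1)).1 hsub
      filter_upwards [this] with x hx using hx
    have hae2 : ∀ᵐ x ∂Q, Q {x} = 1 := by
      filter_upwards [hae] with x hx
      exact le_antisymm prob_le_one (by simpa [tsub_eq_zero_iff_le] using hx)
    obtain ⟨a, ha⟩ := hae2.exists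
    exact hnd ⟨a, eq_dirac_of_singleton Q a ha⟩
  · exact pos_iff_ne_zero.2 h0

section moments
variable (Q : Measure ℝ) [IsProbabilityMeasure Q]

lemma ae_mem_Icc (hQsupp : Q (Set.Icc 0 1) = 1) : ∀ᵐ x ∂Q, x ∈ Set.Icc (0:ℝ) 1 := by
  have : Q (Set.Icc (0:ℝ) 1)ᶜ = 0 := by
    rw [measure_compl measurableSet_Icc (measure_ne_top Q _), hQsupp]
    simp
  exact (ae_iff).2 this

lemma integrable_pow (hQsupp : Q (Set.Icc 0 1) = 1) (k : ℕ) : Integrable (fun x : ℝ => x ^ k) Q := by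
  refine Integrable.mono' (integrable_const 1) (Continuous.aestronglyMeasurable (by continuity)) ?_
  filter_upwards [ae_mem_Icc Q hQsupp] with x hx
  rw [Real.norm_eq_abs, abs_pow]
  exact pow_le_one₀ (abs_nonneg x) (abs_le.2 ⟨by linarith [hx.1], hx.2⟩)

lemma mom_pos (hQsupp : Q (Set.Icc 0 1) = 1) (hnd : ¬ ∃ a : ℝ, Q = Measure.dirac a) (k : ℕ) :
    0 < ∫ x, x ^ k ∂Q := by
  have hae : 0 ≤ᵐ[Q] fun x : ℝ => x ^ k := by
    filter_upwards [ae_mem_Icc Q hQsupp] with x hx using pow_nonneg hx.1 k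
  rw [integral_pos_iff_support_of_nonneg_ae hae (integrable_pow Q hQsupp k)]
  have hsub : {x : ℝ | x ≠ 0} ∩ Set.Icc 0 1 ⊆ Function.support fun x : ℝ => x ^ k := by
    intro x hx
    exact pow_ne_zero k hx.1
  refine lt_of_lt_of_le ?_ (measure_mono (μ := Q) hsub)
  rcases eq_or_ne (Q ({x : ℝ | x ≠ 0} ∩ Set.Icc 0 1)) 0 with h0 | h0
  · exfalso
    have : Q {(0:ℝ)} = 1 := by
      have hcover : Set.Icc (0:ℝ) 1 ⊆ {(0:ℝ)} ∪ ({x : ℝ | x ≠ 0} ∩ Set.Icc 0 1) := by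
        intro x hx
        by_cases hx0 : x = 0
        · exact Or.inl (by simp [hx0])
        · exact Or.inr ⟨hx0, hx⟩
      have := measure_mono (μ := Q) hcover
      rw [hQsupp] at this
      have h2 := (measure_union_le (μ := Q) {(0:ℝ)} ({x : ℝ | x ≠ 0} ∩ Set.Icc 0 1))
      rw [h0, add_zero] at h2
      exact le_antisymm prob_le_one (this.trans h2)
    exact hnd ⟨0, eq_dirac_of_singleton Q 0 this⟩
  · exact h0.bot_lt

end moments

lemma cheb (Q : Measure ℝ) [IsProbabilityMeasure Q] (hQsupp : Q (Set.Icc 0 1) = 1)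
    (hnd : ¬ ∃ a : ℝ, Q = Measure.dirac a) (a b : ℕ) (ha : 1 ≤ a) (hb : 1 ≤ b) :
    (∫ x, x ^ a ∂Q) * (∫ x, x ^ b ∂Q) < ∫ x, x ^ (a + b) ∂Q := by
  set μ := Q.prod Q with hμ
  have hone : ∫ x : ℝ, x ^ 0 ∂Q = 1 := by simp
  have hint : ∀ c d : ℕ, Integrable (fun p : ℝ × ℝ => p.1 ^ c * p.2 ^ d) μ :=
    fun c d => (integrable_pow Q hQsupp c).mul_prod (integrable_pow Q hQsupp d)
  have hval : ∀ c d : ℕ, ∫ p : ℝ × ℝ, p.1 ^ c * p.2 ^ d ∂μ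
      = (∫ x, x ^ c ∂Q) * (∫ x, x ^ d ∂Q) := fun c d =>
    integral_prod_mul (μ := Q) (ν := Q) (fun x => x ^ c) (fun x => x ^ d)
  have hFeq : (fun p : ℝ × ℝ => (p.1 ^ a - p.2 ^ a) * (p.1 ^ b - p.2 ^ b))
      = fun p : ℝ × ℝ => (p.1 ^ (a+b) * p.2 ^ 0 + p.1 ^ 0 * p.2 ^ (a+b))
        - (p.1 ^ a * p.2 ^ b + p.1 ^ b * p.2 ^ a) := by
    funext p
    simp only [pow_zero, pow_add]
    ring
  have hi1 : Integrable (fun p : ℝ × ℝ => p.1 ^ (a+b) * p.2 ^ 0 + p.1 ^ 0 * p.2 ^ (a+b)) μ :=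
    (hint (a+b) 0).add (hint 0 (a+b))
  have hi2 : Integrable (fun p : ℝ × ℝ => p.1 ^ a * p.2 ^ b + p.1 ^ b * p.2 ^ a) μ :=
    (hint a b).add (hint b a)
  have hFint : Integrable (fun p : ℝ × ℝ => (p.1 ^ a - p.2 ^ a) * (p.1 ^ b - p.2 ^ b)) μ := by
    rw [hFeq]; exact hi1.sub hi2
  have hFval : ∫ p : ℝ × ℝ, (p.1 ^ a - p.2 ^ a) * (p.1 ^ b - p.2 ^ b) ∂μ
      = 2 * ((∫ x, x ^ (a+b) ∂Q) - (∫ x, x ^ a ∂Q) * (∫ x, x ^ b ∂Q)) := by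
    rw [hFeq, integral_sub hi1 hi2,
      integral_add (hint (a+b) 0) (hint 0 (a+b)), integral_add (hint a b) (hint b a),
      hval, hval, hval, hval, hone]
    ring
  -- a.e. membership in the square
  have hsq : μ (Set.Icc (0:ℝ) 1 ×ˢ Set.Icc (0:ℝ) 1) = 1 := by
    rw [hμ, Measure.prod_prod, hQsupp]; simp
  have haesq : ∀ᵐ p ∂μ, p ∈ Set.Icc (0:ℝ) 1 ×ˢ Set.Icc (0:ℝ) 1 := by
    have hc : μ (Set.Icc (0:ℝ) 1 ×ˢ Set.Icc (0:ℝ) 1)ᶜ = 0 := by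
      rw [measure_compl (measurableSet_Icc.prod measurableSet_Icc) (measure_ne_top μ _), hsq]
      simp
    exact (ae_iff).2 hc
  have hnonneg : 0 ≤ᵐ[μ] fun p : ℝ × ℝ => (p.1 ^ a - p.2 ^ a) * (p.1 ^ b - p.2 ^ b) := by
    filter_upwards [haesq] with p hp
    obtain ⟨⟨h1, h2⟩, ⟨h3, h4⟩⟩ := hp
    simp only [Pi.zero_apply]
    rcases le_total p.1 p.2 with h | h
    · have e1 : p.1 ^ a ≤ p.2 ^ a := pow_le_pow_left₀ h1 h a
      have e2 : p.1 ^ b ≤ p.2 ^ b := pow_le_pow_left₀ h1 h b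
      nlinarith
    · have e1 : p.2 ^ a ≤ p.1 ^ a := pow_le_pow_left₀ h3 h a
      have e2 : p.2 ^ b ≤ p.1 ^ b := pow_le_pow_left₀ h3 h b
      nlinarith
  have hpos : 0 < ∫ p : ℝ × ℝ, (p.1 ^ a - p.2 ^ a) * (p.1 ^ b - p.2 ^ b) ∂μ := by
    rw [integral_pos_iff_support_of_nonneg_ae hnonneg hFint]
    have hsubset : {p : ℝ × ℝ | p.1 ≠ p.2} ∩ (Set.Icc (0:ℝ) 1 ×ˢ Set.Icc (0:ℝ) 1)
        ⊆ Function.support fun p : ℝ × ℝ => (p.1 ^ a - p.2 ^ a) * (p.1 ^ b - p.2 ^ b) := by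
      rintro p ⟨hne, ⟨h1, h2⟩, ⟨h3, h4⟩⟩
      have key : ∀ c : ℕ, 1 ≤ c → p.1 ^ c ≠ p.2 ^ c := by
        intro c hc
        rcases lt_or_gt_of_ne hne with h | h
        · exact ne_of_lt (pow_lt_pow_left₀ h h1 (by omega))
        · exact (ne_of_lt (pow_lt_pow_left₀ h h3 (by omega))).symm
      exact mul_ne_zero (sub_ne_zero.2 (key a ha)) (sub_ne_zero.2 (key b hb))
    refine lt_of_lt_of_le ?_ (measure_mono (μ := μ) hsubset)
    rcases eq_or_ne (μ ({p : ℝ × ℝ | p.1 ≠ p.2} ∩ (Set.Icc (0:ℝ) 1 ×ˢ Set.Icc (0:ℝ) 1))) 0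
      with h0 | h0
    · exfalso
      have hcsq : μ (Set.Icc (0:ℝ) 1 ×ˢ Set.Icc (0:ℝ) 1)ᶜ = 0 := by
        rw [measure_compl (measurableSet_Icc.prod measurableSet_Icc) (measure_ne_top μ _), hsq]
        simp
      have hcover : {p : ℝ × ℝ | p.1 ≠ p.2} ⊆
          ({p : ℝ × ℝ | p.1 ≠ p.2} ∩ (Set.Icc (0:ℝ) 1 ×ˢ Set.Icc (0:ℝ) 1))
          ∪ (Set.Icc (0:ℝ) 1 ×ˢ Set.Icc (0:ℝ) 1)ᶜ := by
        intro p hp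
        by_cases hmem : p ∈ Set.Icc (0:ℝ) 1 ×ˢ Set.Icc (0:ℝ) 1
        · exact Or.inl ⟨hp, hmem⟩
        · exact Or.inr hmem
      have := (measure_mono (μ := μ) hcover).trans (measure_union_le _ _)
      rw [h0, hcsq, add_zero] at this
      exact absurd (le_antisymm this zero_le) (offdiag_pos Q hnd).ne'
    · exact h0.bot_lt
  rw [hFval] at hpos
  linarith

/-- Strict Hessenberg determinant inequality: for the moment matrices of a non-Dirac
probability measure on `[0,1]`, `det(W^{j-1}) · det(W^{j+1,n}) < d det(W^n)/dγ_j`, where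
the derivative equals the determinant of `W^n` with the row and column containing `-γ_j`
deleted. -/
theorem stmt11 (Q : Measure ℝ) [IsProbabilityMeasure Q] (hQsupp : Q (Set.Icc 0 1) = 1)
    (hnd : ¬ ∃ a : ℝ, Q = Measure.dirac a)
    (m : ℕ → ℝ) (hm : ∀ k, m k = ∫ x, x ^ k ∂Q)
    (γ : ℕ → ℝ) (hγ : ∀ i, 0 < γ i)
    (n j : ℕ) (hj1 : 1 ≤ j) (hjn : j ≤ n) :
    let D : ℝ := ((Wgen m γ 0 1 (n + 1)).submatrix
        (Fin.succAbove ⟨j, by omega⟩) (Fin.succAbove ⟨j - 1, by omega⟩)).det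
    HasDerivAt (fun g : ℝ => (Wgen m (Function.update γ j g) 0 1 (n + 1)).det) D (γ j) ∧
    (Wgen m γ 0 1 j).det * (Wgen m γ 0 (j + 1) (n - j + 1)).det < D := by
  intro D
  have hm1 : ∀ k, 1 ≤ k → 0 < m k := fun k _ => by
    rw [hm k]; exact mom_pos Q hQsupp hnd k
  have hch : ∀ a b, 1 ≤ a → 1 ≤ b → m a * m b < m (a + b) := fun a b ha hb => by
    rw [hm a, hm b, hm (a+b)]; exact cheb Q hQsupp hnd a b ha hb
  have hγ0 : ∀ g : ℝ, ∀ i : ℕ, i ≠ j → Function.update γ j g i = γ i :=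
    fun g i hi => Function.update_of_ne hi _ _
  set rj : Fin (n+1) := ⟨j, by omega⟩ with hrj
  set cj : Fin (n+1) := ⟨j - 1, by omega⟩ with hcj
  have hrjv : (rj : ℕ) = j := rfl
  have hcjv : (cj : ℕ) = j - 1 := rfl
  have hD : D = ((Wgen m γ 0 1 (n + 1)).submatrix rj.succAbove cj.succAbove).det := rfl
  set A0 : Matrix (Fin (n+1)) (Fin (n+1)) ℝ := Wgen m (Function.update γ j 0) 0 1 (n+1)
    with hA0
  set e : Fin (n+1) → ℝ := Pi.single cj 1 with he
  have hev : ∀ k : Fin (n+1), e k = if k = cj then 1 else 0 := by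
    intro k
    rw [he, Pi.single_apply]
  -- the matrix as a row update of `A0`
  have hrow : ∀ g : ℝ, Wgen m (Function.update γ j g) 0 1 (n+1)
      = A0.updateRow rj (A0 rj + (-g) • e) := by
    intro g
    ext i k
    rw [Matrix.updateRow_apply]
    by_cases hi : i = rj
    · rw [if_pos hi, Pi.add_apply, Pi.smul_apply, smul_eq_mul, hev, hi]
      have hcke : (k = cj) ↔ ((k:ℕ) + 1 = j) := by
        rw [Fin.ext_iff, hcjv]
        omega
      simp only [Wgen, Matrix.of_apply, hA0, hrjv, Function.update_apply, hcke]
      split_ifs <;> first | rfl | omega | ring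
    · rw [if_neg hi]
      have hij : (i : ℕ) ≠ j := fun hc => hi (Fin.ext (hc.trans hrjv.symm))
      simp only [Wgen, Matrix.of_apply, hA0, Function.update_apply]
      split_ifs with h1 h2 h3 h4 <;> first
        | rfl
        | omega
  -- the minor is the one appearing in `D`
  have hminor : (A0.updateRow rj e).submatrix rj.succAbove cj.succAbove
      = (Wgen m γ 0 1 (n+1)).submatrix rj.succAbove cj.succAbove := by
    ext i k
    rw [Matrix.submatrix_apply, Matrix.submatrix_apply,
      Matrix.updateRow_ne (Fin.succAbove_ne rj i)]
    have hij : ((rj.succAbove i : Fin (n+1)) : ℕ) ≠ j := by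
      intro hc
      exact Fin.succAbove_ne rj i (Fin.ext (hc.trans hrjv.symm))
    simp only [Wgen, Matrix.of_apply, hA0, Function.update_apply]
    split_ifs with h1 h2 h3 h4 <;> first
      | rfl
      | omega
  -- determinant of the elementary row replacement
  have hE : (A0.updateRow rj e).det = -D := by
    rw [Matrix.det_succ_row (A0.updateRow rj e) rj, Finset.sum_eq_single cj]
    · rw [Matrix.updateRow_self, hev, if_pos rfl, hminor]
      have hodd : Odd ((rj : ℕ) + (cj : ℕ)) := ⟨j - 1, by rw [hrjv, hcjv]; omega⟩
      rw [hodd.neg_one_pow, hD]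
      ring
    · intro k _ hk
      rw [Matrix.updateRow_self, hev, if_neg hk]
      ring
    · intro h
      exact absurd (Finset.mem_univ cj) h
  -- the affine formula
  have key : ∀ g : ℝ, (Wgen m (Function.update γ j g) 0 1 (n+1)).det = A0.det + g * D := by
    intro g
    rw [hrow g, Matrix.det_updateRow_add, Matrix.det_updateRow_smul,
      Matrix.updateRow_eq_self, hE]
    ring
  constructor
  · have hfun : (fun g : ℝ => (Wgen m (Function.update γ j g) 0 1 (n+1)).det)
        = fun g : ℝ => A0.det + g * D := funext key
    rw [hfun]
    simpa using ((hasDerivAt_id (γ j)).mul_const D).const_add A0.det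
  · have hblock := Wgen_block (m := m) (γ := γ) (n+1) 0 1 j hj1 (by omega)
    rw [show j - 1 + 1 = j from by omega, show 1 + (n+1) - (j+1) = n - j + 1 from by omega]
      at hblock
    have hgen := Wgen_gen (m := m) (γ := γ) hm1 hγ hch (n+1) 0 1 j hj1 (by omega)
    have h1 := key 1
    rw [← hA0] at hblock hgen
    rw [← hblock]
    linarith [hgen, h1]
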